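/- The partial derivative of the standard bivariate normal CDF Φ₂(x₁, x₂, ρ) with respect to the correlation parameter ρ equals the bivariate normal density φ_Σ(ρ)(x₁, x₂), for |ρ| < 1 (Plackett's identity). -/

import Mathlib

open MeasureTheory Real Filter Set Topology

noncomputable def stdPdf (x : ℝ) : ℝ := (Real.sqrt (2 * Real.pi))⁻¹ * Real.exp (-x ^ 2 / 2)

-- test basic pieces
lemma stdPdf_pos (x : ℝ) : 0 < stdPdf x := by
  unfold stdPdf
  positivity

lemma integrable_stdPdf : Integrable stdPdf := by
  have h := integrable_exp_neg_mul_sq (show (0:ℝ) < 2⁻¹ by norm_num)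
  have : stdPdf = fun x => (Real.sqrt (2 * Real.pi))⁻¹ * Real.exp (-(2⁻¹) * x ^ 2) := by
    funext x; unfold stdPdf; ring_nf
  rw [this]
  exact h.const_mul _

lemma tendsto_integral_Iic_atBot {f : ℝ → ℝ} (hf : Integrable f) :
    Tendsto (fun y => ∫ x in Iic y, f x) atBot (𝓝 0) := by
  have : (fun y => ∫ x in Iic y, f x) = fun y => ∫ x, (Iic y).indicator f x := by
    funext y; rw [integral_indicator measurableSet_Iic]
  rw [this]
  have h0 : (0:ℝ) = ∫ x : ℝ, (0:ℝ) := by simp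
  rw [h0]
  apply tendsto_integral_filter_of_dominated_convergence (fun x => |f x|)
  · filter_upwards with y
    exact (hf.1.indicator measurableSet_Iic)
  · filter_upwards with y
    filter_upwards with x
    rw [Set.indicator_apply]
    split_ifs
    · rfl
    · simp
  · exact hf.abs
  · filter_upwards with x
    have : ∀ᶠ y in atBot, (Iic y).indicator f x = 0 := by
      filter_upwards [eventually_lt_atBot x] with y hy
      simp [Set.indicator_apply, not_le.mpr hy, hy.not_ge]
    exact Tendsto.congr' (this.mono fun y h => h.symm) tendsto_const_nhds

noncomputable def stdCdf (x : ℝ) : ℝ := ∫ t in Set.Iic x, stdPdf t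

lemma continuous_stdPdf : Continuous stdPdf := by
  unfold stdPdf; continuity

lemma hasDerivAt_stdCdf (x : ℝ) : HasDerivAt stdCdf (stdPdf x) x := by
  have key : ∀ y : ℝ, stdCdf y = stdCdf 0 + ∫ t in (0:ℝ)..y, stdPdf t := by
    intro y
    rw [← intervalIntegral.integral_Iic_sub_Iic integrable_stdPdf.integrableOn
      integrable_stdPdf.integrableOn]
    unfold stdCdf; ring
  have h1 : HasDerivAt (fun y => stdCdf 0 + ∫ t in (0:ℝ)..y, stdPdf t) (stdPdf x) x := by
    apply HasDerivAt.const_add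
    exact intervalIntegral.integral_hasDerivAt_right
      (continuous_stdPdf.intervalIntegrable _ _)
      continuous_stdPdf.aestronglyMeasurable.stronglyMeasurableAtFilter
      continuous_stdPdf.continuousAt
  exact h1.congr_of_eventuallyEq (Eventually.of_forall key)

lemma stdCdf_nonneg (x : ℝ) : 0 ≤ stdCdf x :=
  integral_nonneg fun t => (stdPdf_pos t).le

lemma stdCdf_le (x : ℝ) : stdCdf x ≤ ∫ t, stdPdf t :=
  setIntegral_le_integral integrable_stdPdf (Eventually.of_forall fun t => (stdPdf_pos t).le)

lemma tendsto_stdCdf_atBot : Tendsto stdCdf atBot (𝓝 0) :=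
  tendsto_integral_Iic_atBot integrable_stdPdf

noncomputable def bvnPdf (ρ u v : ℝ) : ℝ :=
  (2 * Real.pi * Real.sqrt (1 - ρ ^ 2))⁻¹ *
    Real.exp (-(u ^ 2 - 2 * ρ * u * v + v ^ 2) / (2 * (1 - ρ ^ 2)))

lemma bvn_factor {r : ℝ} (hr : r ^ 2 < 1) (u v : ℝ) :
    bvnPdf r u v =
      stdPdf u * ((Real.sqrt (1 - r ^ 2))⁻¹ * stdPdf ((v - r * u) / Real.sqrt (1 - r ^ 2))) := by
  have h1 : (0:ℝ) < 1 - r ^ 2 := by linarith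
  have hs : (0:ℝ) < Real.sqrt (1 - r ^ 2) := Real.sqrt_pos.mpr h1
  have hs2 : Real.sqrt (1 - r ^ 2) ^ 2 = 1 - r ^ 2 := Real.sq_sqrt h1.le
  have hp : (0:ℝ) < Real.sqrt (2 * Real.pi) := Real.sqrt_pos.mpr (by positivity)
  have hp2 : Real.sqrt (2 * Real.pi) ^ 2 = 2 * Real.pi := Real.sq_sqrt (by positivity)
  unfold bvnPdf stdPdf
  rw [div_pow, hs2]
  have hexp : Real.exp (-u ^ 2 / 2) * Real.exp (-((v - r * u) ^ 2 / (1 - r ^ 2)) / 2) =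
      Real.exp (-(u ^ 2 - 2 * r * u * v + v ^ 2) / (2 * (1 - r ^ 2))) := by
    rw [← Real.exp_add]; congr 1; field_simp; ring
  have hc : (2 * Real.pi * Real.sqrt (1 - r ^ 2))⁻¹ =
      (Real.sqrt (2 * Real.pi))⁻¹ * ((Real.sqrt (1 - r ^ 2))⁻¹ * (Real.sqrt (2 * Real.pi))⁻¹) := by
    rw [← mul_inv, ← mul_inv]
    congr 1
    nlinarith [hp2]
  rw [hc, ← hexp]; ring

lemma integrable_stdPdf_affine {s c : ℝ} (hs : s ≠ 0) :
    Integrable (fun v : ℝ => stdPdf ((v - c) / s)) := by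
  have h1 : Integrable (fun x : ℝ => stdPdf (x + -(c / s))) :=
    integrable_stdPdf.comp_add_right _
  have h2 : Integrable (fun v : ℝ => stdPdf (s⁻¹ * v + -(c / s))) := by
    rw [integrable_comp_mul_left_iff (fun x : ℝ => stdPdf (x + -(c / s))) (inv_ne_zero hs)]
    exact h1
  refine h2.congr (Eventually.of_forall fun v => ?_)
  have h : s⁻¹ * v + -(c / s) = (v - c) / s := by field_simp; ring
  simp only []
  rw [h]

lemma integrable_bvn_right {r : ℝ} (hr : r ^ 2 < 1) (u : ℝ) :
    Integrable (fun v => bvnPdf r u v) := by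
  have h1 : (0:ℝ) < 1 - r ^ 2 := by linarith
  have hs : (0:ℝ) < Real.sqrt (1 - r ^ 2) := Real.sqrt_pos.mpr h1
  have := ((integrable_stdPdf_affine (s := Real.sqrt (1 - r ^ 2)) (c := r * u)
    hs.ne').const_mul ((Real.sqrt (1 - r ^ 2))⁻¹)).const_mul (stdPdf u)
  refine this.congr (Eventually.of_forall fun v => ?_)
  simp only []
  rw [← bvn_factor hr]

lemma inner_integral {r : ℝ} (hr : r ^ 2 < 1) (u y : ℝ) :
    (∫ v in Iic y, bvnPdf r u v) =
      stdPdf u * stdCdf ((y - r * u) / Real.sqrt (1 - r ^ 2)) := by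
  have h1 : (0:ℝ) < 1 - r ^ 2 := by linarith
  have hs : (0:ℝ) < Real.sqrt (1 - r ^ 2) := Real.sqrt_pos.mpr h1
  set s : ℝ := Real.sqrt (1 - r ^ 2) with hsdef
  set G : ℝ → ℝ := fun y => (∫ v in Iic y, bvnPdf r u v) - stdPdf u * stdCdf ((y - r * u) / s)
    with hG
  have hint : Integrable (fun v => bvnPdf r u v) := integrable_bvn_right hr u
  -- derivative of G is zero
  have hGd : ∀ y : ℝ, HasDerivAt G 0 y := by
    intro y
    have hd1 : HasDerivAt (fun y => ∫ v in Iic y, bvnPdf r u v) (bvnPdf r u y) y := by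
      have key : ∀ z : ℝ, (∫ v in Iic z, bvnPdf r u v)
          = (∫ v in Iic (0:ℝ), bvnPdf r u v) + ∫ v in (0:ℝ)..z, bvnPdf r u v := by
        intro z
        rw [← intervalIntegral.integral_Iic_sub_Iic hint.integrableOn hint.integrableOn]
        ring
      have hcont : Continuous (fun v => bvnPdf r u v) := by unfold bvnPdf; fun_prop
      have := (intervalIntegral.integral_hasDerivAt_right
        (hcont.intervalIntegrable 0 y)
        hcont.aestronglyMeasurable.stronglyMeasurableAtFilter
        hcont.continuousAt).const_add (∫ v in Iic (0:ℝ), bvnPdf r u v)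
      exact this.congr_of_eventuallyEq (Eventually.of_forall key)
    have hd2 : HasDerivAt (fun y => stdPdf u * stdCdf ((y - r * u) / s))
        (bvnPdf r u y) y := by
      have haff : HasDerivAt (fun y : ℝ => (y - r * u) / s) (s⁻¹) y := by
        simpa [div_eq_mul_inv] using ((hasDerivAt_id y).sub_const (r * u)).div_const s
      have := ((hasDerivAt_stdCdf ((y - r * u) / s)).comp y haff).const_mul (stdPdf u)
      refine this.congr_deriv (Eq.symm ?_)
      rw [bvn_factor hr u y]
      ring
    have := hd1.sub hd2
    rw [sub_self] at this
    exact this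
  have hconst : ∀ y : ℝ, G y = G 0 := by
    intro y
    exact is_const_of_deriv_eq_zero (fun x => (hGd x).differentiableAt)
      (fun x => (hGd x).deriv) y 0
  have htend : Tendsto G atBot (𝓝 0) := by
    have t1 : Tendsto (fun y => ∫ v in Iic y, bvnPdf r u v) atBot (𝓝 0) :=
      tendsto_integral_Iic_atBot hint
    have t2 : Tendsto (fun y : ℝ => (y - r * u) / s) atBot atBot := by
      apply Tendsto.atBot_div_const hs
      exact tendsto_atBot_add_const_right _ _ tendsto_id
    have t3 : Tendsto (fun y => stdPdf u * stdCdf ((y - r * u) / s)) atBot (𝓝 (stdPdf u * 0)) :=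
      (tendsto_stdCdf_atBot.comp t2).const_mul _
    rw [mul_zero] at t3
    simpa [hG] using t1.sub t3
  have hG0 : G 0 = 0 := by
    have h : Tendsto G atBot (𝓝 (G 0)) := by
      rw [show G = fun _ => G 0 from funext hconst]
      exact tendsto_const_nhds
    exact tendsto_nhds_unique h htend
  have := hconst y
  rw [hG0] at this
  simpa [hG, sub_eq_zero] using this

lemma hasDerivAt_bvn_u {ρ : ℝ} (hρ : ρ ^ 2 < 1) (x₂ u₀ : ℝ) :
    HasDerivAt (fun u => bvnPdf ρ u x₂)
      (bvnPdf ρ u₀ x₂ * ((ρ * x₂ - u₀) / (1 - ρ ^ 2))) u₀ := by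
  have h1 : (0:ℝ) < 1 - ρ ^ 2 := by linarith
  have ha : HasDerivAt (fun u : ℝ => u ^ 2) (2 * u₀) u₀ := by
    simpa using hasDerivAt_pow 2 u₀
  have hb : HasDerivAt (fun u : ℝ => 2 * ρ * u * x₂) (2 * ρ * x₂) u₀ := by
    have h := (hasDerivAt_id u₀).const_mul (2 * ρ * x₂)
    rw [mul_one] at h
    exact h.congr_of_eventuallyEq (Eventually.of_forall fun u => by simp only [id_eq]; ring)
  have hq : HasDerivAt (fun u : ℝ => -(u ^ 2 - 2 * ρ * u * x₂ + x₂ ^ 2) / (2 * (1 - ρ ^ 2)))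
      (-(2 * u₀ - 2 * ρ * x₂) / (2 * (1 - ρ ^ 2))) u₀ :=
    (((ha.sub hb).add_const (x₂ ^ 2)).neg).div_const _
  have h := (hq.exp).const_mul ((2 * Real.pi * Real.sqrt (1 - ρ ^ 2))⁻¹)
  have heq : HasDerivAt (fun u => bvnPdf ρ u x₂)
      ((2 * Real.pi * Real.sqrt (1 - ρ ^ 2))⁻¹ *
        (Real.exp (-(u₀ ^ 2 - 2 * ρ * u₀ * x₂ + x₂ ^ 2) / (2 * (1 - ρ ^ 2))) *
          (-(2 * u₀ - 2 * ρ * x₂) / (2 * (1 - ρ ^ 2))))) u₀ :=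
    h.congr_of_eventuallyEq (Eventually.of_forall fun u => by unfold bvnPdf; ring)
  convert heq using 1
  unfold bvnPdf
  field_simp
  ring

lemma tendsto_bvn_u_atBot {ρ : ℝ} (hρ : ρ ^ 2 < 1) (x₂ : ℝ) :
    Tendsto (fun u => bvnPdf ρ u x₂) atBot (𝓝 0) := by
  have h1 : (0:ℝ) < 1 - ρ ^ 2 := by linarith
  have t1 : Tendsto (fun u : ℝ => u ^ 2 - 2 * ρ * u * x₂ + x₂ ^ 2) atBot atTop := by
    have ha : Tendsto (fun u : ℝ => u - ρ * x₂) atBot atBot :=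
      tendsto_atBot_add_const_right _ _ tendsto_id
    have hb : Tendsto (fun u : ℝ => (u - ρ * x₂) * (u - ρ * x₂)) atBot atTop :=
      ha.atBot_mul_atBot₀ ha
    have hc : Tendsto (fun u : ℝ => (u - ρ * x₂) * (u - ρ * x₂) + x₂ ^ 2 * (1 - ρ ^ 2))
        atBot atTop := tendsto_atTop_add_const_right _ _ hb
    exact hc.congr (fun u => by ring)
  have t2 : Tendsto (fun u : ℝ => -(u ^ 2 - 2 * ρ * u * x₂ + x₂ ^ 2) / (2 * (1 - ρ ^ 2)))
      atBot atBot := Tendsto.atBot_div_const (by linarith) (tendsto_neg_atTop_atBot.comp t1)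
  have t3 := (Real.tendsto_exp_atBot.comp t2).const_mul
    ((2 * Real.pi * Real.sqrt (1 - ρ ^ 2))⁻¹)
  rw [mul_zero] at t3
  simp only [Function.comp_def] at t3
  exact t3.congr (fun u => by unfold bvnPdf; ring)

lemma hasDerivAt_F {u x₂ : ℝ} {r : ℝ} (hr : r ^ 2 < 1) :
    HasDerivAt (fun r' => stdPdf u * stdCdf ((x₂ - r' * u) / Real.sqrt (1 - r' ^ 2)))
      (bvnPdf r u x₂ * ((r * x₂ - u) / (1 - r ^ 2))) r := by
  have h1 : (0:ℝ) < 1 - r ^ 2 := by linarith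
  have hs : (0:ℝ) < Real.sqrt (1 - r ^ 2) := Real.sqrt_pos.mpr h1
  have hs2 : Real.sqrt (1 - r ^ 2) ^ 2 = 1 - r ^ 2 := Real.sq_sqrt h1.le
  -- derivative of denominator
  have hD : HasDerivAt (fun r' : ℝ => Real.sqrt (1 - r' ^ 2))
      (1 / (2 * Real.sqrt (1 - r ^ 2)) * (0 - 2 * r)) r := by
    have hin : HasDerivAt (fun r' : ℝ => 1 - r' ^ 2) (0 - 2 * r) r := by
      have := (hasDerivAt_pow 2 r).const_sub 1
      simpa using this
    exact (Real.hasDerivAt_sqrt h1.ne').comp r hin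
  have hN : HasDerivAt (fun r' : ℝ => x₂ - r' * u) (-u) r := by
    have h := ((hasDerivAt_id r).const_mul u).const_sub x₂
    rw [mul_one] at h
    exact h.congr_of_eventuallyEq (Eventually.of_forall fun r' => by simp only [id_eq]; ring)
  have hz : HasDerivAt (fun r' : ℝ => (x₂ - r' * u) / Real.sqrt (1 - r' ^ 2))
      (((-u) * Real.sqrt (1 - r ^ 2) -
        (x₂ - r * u) * (1 / (2 * Real.sqrt (1 - r ^ 2)) * (0 - 2 * r))) /
          Real.sqrt (1 - r ^ 2) ^ 2) r := hN.div hD hs.ne'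
  have h := ((hasDerivAt_stdCdf ((x₂ - r * u) / Real.sqrt (1 - r ^ 2))).comp r hz).const_mul
    (stdPdf u)
  have h3 : Real.sqrt (1 - r ^ 2) ^ 3 = (1 - r ^ 2) * Real.sqrt (1 - r ^ 2) := by
    rw [pow_succ, hs2, mul_comm]
  refine h.congr_deriv (Eq.symm ?_)
  rw [bvn_factor hr u x₂]
  field_simp
  ring_nf
  simp only [hs2]
  ring

lemma bvn_slice {r : ℝ} (hr : r ^ 2 < 1) (u v : ℝ) :
    bvnPdf r u v = (2 * Real.pi * Real.sqrt (1 - r ^ 2))⁻¹ * Real.exp (-v ^ 2 / 2) *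
      Real.exp (-(u - r * v) ^ 2 / (2 * (1 - r ^ 2))) := by
  have h1 : (0:ℝ) < 1 - r ^ 2 := by linarith
  unfold bvnPdf
  conv_rhs => rw [mul_assoc, ← Real.exp_add]
  congr 1
  field_simp
  ring

lemma bound_le {ρ x₂ : ℝ} (hρ : |ρ| < 1) :
    ∀ u : ℝ, ∀ r ∈ Metric.ball ρ ((1 - |ρ|)/2),
      ‖bvnPdf r u x₂ * ((r * x₂ - u) / (1 - r ^ 2))‖ ≤
        (2 * Real.pi * Real.sqrt (1 - ((1 + |ρ|)/2) ^ 2))⁻¹ * 1 *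
          Real.exp (x₂ ^ 2 - u ^ 2 / 4) *
            ((|x₂| + |u|) / (1 - ((1 + |ρ|)/2) ^ 2)) := by
  intro u r hrball
  set a : ℝ := (1 + |ρ|)/2 with ha
  have ha0 : 0 < a := by positivity
  have ha1 : a < 1 := by rw [ha]; linarith
  have haa : a ^ 2 < 1 := by nlinarith
  have hra : |r| ≤ a := by
    have := mem_ball_iff_norm.mp hrball
    rw [Real.norm_eq_abs] at this
    have h2 := abs_sub_abs_le_abs_sub r ρ
    rw [ha]; linarith
  have hr2 : r ^ 2 ≤ a ^ 2 := by
    rw [← sq_abs r]; exact pow_le_pow_left₀ (abs_nonneg r) hra 2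
  have h1r : (0:ℝ) < 1 - r ^ 2 := by linarith
  have h1a : (0:ℝ) < 1 - a ^ 2 := by linarith
  have hsr : (0:ℝ) < Real.sqrt (1 - r ^ 2) := Real.sqrt_pos.mpr h1r
  have hsa : (0:ℝ) < Real.sqrt (1 - a ^ 2) := Real.sqrt_pos.mpr h1a
  have hrx : (r * x₂) ^ 2 ≤ x₂ ^ 2 := by
    rw [mul_pow]; nlinarith [sq_nonneg x₂]
  -- rewrite LHS
  rw [bvn_slice (lt_of_le_of_lt hr2 haa) u x₂, Real.norm_eq_abs, abs_mul, abs_mul, abs_mul,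
    abs_div]
  rw [abs_of_pos (by positivity : (0:ℝ) < (2 * Real.pi * Real.sqrt (1 - r ^ 2))⁻¹),
    abs_of_pos (Real.exp_pos _), abs_of_pos (Real.exp_pos _),
    abs_of_pos h1r]
  have hA : (2 * Real.pi * Real.sqrt (1 - r ^ 2))⁻¹ ≤
      (2 * Real.pi * Real.sqrt (1 - a ^ 2))⁻¹ := by
    apply inv_anti₀ (by positivity)
    have : Real.sqrt (1 - a ^ 2) ≤ Real.sqrt (1 - r ^ 2) := Real.sqrt_le_sqrt (by linarith)
    nlinarith [Real.pi_pos]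
  have hB : Real.exp (-x₂ ^ 2 / 2) ≤ 1 := by
    rw [Real.exp_le_one_iff]
    nlinarith [sq_nonneg x₂]
  have hC : Real.exp (-(u - r * x₂) ^ 2 / (2 * (1 - r ^ 2))) ≤
      Real.exp (x₂ ^ 2 - u ^ 2 / 4) := by
    rw [Real.exp_le_exp]
    have step1 : (u - r * x₂) ^ 2 / 2 ≤ (u - r * x₂) ^ 2 / (2 * (1 - r ^ 2)) :=
      div_le_div_of_nonneg_left (sq_nonneg _) (by linarith) (by nlinarith)
    have step2 : -((u - r * x₂) ^ 2 / 2) ≤ x₂ ^ 2 - u ^ 2 / 4 := by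
      nlinarith [sq_nonneg (u - 2 * (r * x₂)), hrx]
    calc -(u - r * x₂) ^ 2 / (2 * (1 - r ^ 2)) = -((u - r * x₂) ^ 2 / (2 * (1 - r ^ 2))) := by
            ring
      _ ≤ -((u - r * x₂) ^ 2 / 2) := by linarith
      _ ≤ x₂ ^ 2 - u ^ 2 / 4 := step2
  have hD : |r * x₂ - u| / (1 - r ^ 2) ≤ (|x₂| + |u|) / (1 - a ^ 2) := by
    apply div_le_div₀ (by positivity) ?_ h1a (by linarith)
    calc |r * x₂ - u| ≤ |r * x₂| + |u| := abs_sub _ _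
      _ ≤ |x₂| + |u| := by
          rw [abs_mul]
          nlinarith [abs_nonneg x₂, abs_nonneg r]
  calc (2 * Real.pi * Real.sqrt (1 - r ^ 2))⁻¹ * Real.exp (-x₂ ^ 2 / 2) *
        Real.exp (-(u - r * x₂) ^ 2 / (2 * (1 - r ^ 2))) * (|r * x₂ - u| / (1 - r ^ 2))
      ≤ (2 * Real.pi * Real.sqrt (1 - a ^ 2))⁻¹ * 1 *
        Real.exp (x₂ ^ 2 - u ^ 2 / 4) * ((|x₂| + |u|) / (1 - a ^ 2)) := by
        have m1 : (2 * Real.pi * Real.sqrt (1 - r ^ 2))⁻¹ * Real.exp (-x₂ ^ 2 / 2) ≤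
            (2 * Real.pi * Real.sqrt (1 - a ^ 2))⁻¹ * 1 :=
          mul_le_mul hA hB (Real.exp_pos _).le (by positivity)
        have m2 : (2 * Real.pi * Real.sqrt (1 - r ^ 2))⁻¹ * Real.exp (-x₂ ^ 2 / 2) *
            Real.exp (-(u - r * x₂) ^ 2 / (2 * (1 - r ^ 2))) ≤
            (2 * Real.pi * Real.sqrt (1 - a ^ 2))⁻¹ * 1 * Real.exp (x₂ ^ 2 - u ^ 2 / 4) :=
          mul_le_mul m1 hC (Real.exp_pos _).le (by positivity)
        exact mul_le_mul m2 hD (by positivity) (by positivity)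

lemma continuous_stdCdf : Continuous stdCdf :=
  continuous_iff_continuousAt.mpr fun x => (hasDerivAt_stdCdf x).continuousAt

lemma integrable_bound (c : ℝ) : Integrable (fun u : ℝ => (c + |u|) * Real.exp (-u ^ 2 / 4)) := by
  have h₁ : Integrable (fun u : ℝ => Real.exp (-u ^ 2 / 4)) := by
    have h := integrable_exp_neg_mul_sq (show (0:ℝ) < 4⁻¹ by norm_num)
    have he : (fun u : ℝ => Real.exp (-u ^ 2 / 4)) = fun u : ℝ => Real.exp (-(4⁻¹) * u ^ 2) := by
      funext u; congr 1; ring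
    rw [he]
    exact h
  have h₂ : Integrable (fun u : ℝ => |u| * Real.exp (-u ^ 2 / 4)) := by
    have h := (integrable_mul_exp_neg_mul_sq (show (0:ℝ) < 4⁻¹ by norm_num)).abs
    have he : (fun u : ℝ => |u| * Real.exp (-u ^ 2 / 4))
        = fun u : ℝ => |u * Real.exp (-(4⁻¹) * u ^ 2)| := by
      funext u
      rw [abs_mul, abs_of_pos (Real.exp_pos _)]
      congr 2; ring
    rw [he]
    exact h
  have he : (fun u : ℝ => (c + |u|) * Real.exp (-u ^ 2 / 4))
      = fun u : ℝ => c * Real.exp (-u ^ 2 / 4) + |u| * Real.exp (-u ^ 2 / 4) := by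
    funext u; ring
  rw [he]
  exact (h₁.const_mul c).add h₂

noncomputable def Phi2 (x₁ x₂ ρ : ℝ) : ℝ :=
  ∫ u in Set.Iic x₁, ∫ v in Set.Iic x₂, bvnPdf ρ u v

theorem stmt_1 (ρ : ℝ) (hρ : |ρ| < 1) (x₁ x₂ : ℝ) :
    HasDerivAt (fun r => Phi2 x₁ x₂ r) (bvnPdf ρ x₁ x₂) ρ := by
  have hρ2 : ρ ^ 2 < 1 := by
    rw [← sq_abs]; nlinarith [abs_nonneg ρ]
  set a : ℝ := (1 + |ρ|)/2 with ha
  set ε : ℝ := (1 - |ρ|)/2 with hε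
  have hε0 : 0 < ε := by rw [hε]; linarith
  have hball_sq : ∀ r ∈ Metric.ball ρ ε, r ^ 2 < 1 := by
    intro r hr
    have h := mem_ball_iff_norm.mp hr
    rw [Real.norm_eq_abs] at h
    have h2 := abs_sub_abs_le_abs_sub r ρ
    have : |r| < 1 := by rw [hε] at h; linarith
    rw [← sq_abs]; nlinarith [abs_nonneg r]
  set F : ℝ → ℝ → ℝ := fun r u => stdPdf u * stdCdf ((x₂ - r * u) / Real.sqrt (1 - r ^ 2))
    with hF
  set F' : ℝ → ℝ → ℝ := fun r u => bvnPdf r u x₂ * ((r * x₂ - u) / (1 - r ^ 2)) with hF'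
  have key := hasDerivAt_integral_of_dominated_loc_of_deriv_le (μ := volume.restrict (Iic x₁))
    (F := F) (F' := F') (x₀ := ρ)
    (bound := fun u => (2 * Real.pi * Real.sqrt (1 - a ^ 2))⁻¹ * 1 *
      Real.exp (x₂ ^ 2 - u ^ 2 / 4) * ((|x₂| + |u|) / (1 - a ^ 2)))
    (Metric.ball_mem_nhds ρ hε0)
    (Eventually.of_forall fun r => by
      apply Continuous.aestronglyMeasurable
      exact continuous_stdPdf.mul (continuous_stdCdf.comp (by fun_prop)))
    (by
      -- integrability of F ρ
      have hM : Integrable (fun u => (∫ t, stdPdf t) * stdPdf u) (volume.restrict (Iic x₁)) :=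
        (integrable_stdPdf.const_mul _).restrict
      refine hM.mono' ?_ (Eventually.of_forall fun u => ?_)
      · exact (continuous_stdPdf.mul (continuous_stdCdf.comp (by fun_prop))).aestronglyMeasurable
      · rw [hF]
        simp only [Real.norm_eq_abs, abs_mul, abs_of_pos (stdPdf_pos u),
          abs_of_nonneg (stdCdf_nonneg _)]
        have := stdCdf_le ((x₂ - ρ * u) / Real.sqrt (1 - ρ ^ 2))
        nlinarith [stdPdf_pos u, stdCdf_nonneg ((x₂ - ρ * u) / Real.sqrt (1 - ρ ^ 2))])
    (by
      apply Continuous.aestronglyMeasurable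
      rw [hF']
      unfold bvnPdf
      fun_prop)
    (Eventually.of_forall fun u r hr => bound_le hρ u r hr)
    ((integrable_bound |x₂|).const_mul
        ((2 * Real.pi * Real.sqrt (1 - a ^ 2))⁻¹ * 1 * Real.exp (x₂ ^ 2) / (1 - a ^ 2))
      |>.restrict.congr (Eventually.of_forall fun u => by
        simp only []
        rw [show x₂ ^ 2 - u ^ 2 / 4 = x₂ ^ 2 + -u ^ 2 / 4 by ring, Real.exp_add]
        ring))
    (Eventually.of_forall fun u r hr => hasDerivAt_F (hball_sq r hr))
  obtain ⟨hint, hderiv⟩ := key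
  have hval : (∫ u in Iic x₁, F' ρ u) = bvnPdf ρ x₁ x₂ := by
    have := integral_Iic_of_hasDerivAt_of_tendsto'
      (f := fun u => bvnPdf ρ u x₂) (f' := fun u => F' ρ u) (a := x₁)
      (fun u _ => hasDerivAt_bvn_u hρ2 x₂ u) hint (tendsto_bvn_u_atBot hρ2 x₂)
    rw [this, sub_zero]
  rw [← hval]
  apply hderiv.congr_of_eventuallyEq
  filter_upwards [Metric.ball_mem_nhds ρ hε0] with r hr
  unfold Phi2
  exact setIntegral_congr_fun measurableSet_Iic fun u _ => inner_integral (hball_sq r hr) u x₂
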